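/- Let (E,d) be a complete separable metric space, p ≥ 1, and μ a Borel probability measure on E satisfying EI_ε(p): ∫ exp(ε·d(x,x₀)^p) dμ(x) < ∞ for some ε > 0 and x₀ ∈ E. Then there exists a constant C(ε) such that for every probability measure ν on E, W_p^p(ν,μ) ≤ C(ε)·( H(ν,μ) + H(ν,μ)^{1/2} ). -/

import Mathlib

open MeasureTheory ENNReal
open scoped Classical

noncomputable section

/-- `π` is a coupling of the probability measures `μ` and `ν`:
its marginal distributions are `μ` and `ν`. -/
def IsCoupling {E : Type*} [MeasurableSpace E] (π : Measure (E × E)) (μ ν : Measure E) : Prop :=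
  π.map Prod.fst = μ ∧ π.map Prod.snd = ν

/-- The `p`-th power of the `L^p` Wasserstein distance, `W_p^p(μ,ν)`, as the infimum of the
transportation cost over all couplings. -/
def Wcost {E : Type*} [MetricSpace E] [MeasurableSpace E] (p : ℝ) (μ ν : Measure E) : ℝ≥0∞ :=
  ⨅ (π : Measure (E × E)) (_ : IsProbabilityMeasure π) (_ : IsCoupling π μ ν),
    ∫⁻ z, ENNReal.ofReal (dist z.1 z.2 ^ p) ∂π

/-- Relative entropy (Kullback-Leibler information) `H(ν,μ)`:
`∫ log (dν/dμ) dν` if `ν ≪ μ` (and the integral exists), `+∞` otherwise. -/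
def relEnt {Ω : Type*} [MeasurableSpace Ω] (ν μ : Measure Ω) : ℝ≥0∞ :=
  if ν ≪ μ ∧ Integrable (fun x => Real.log ((ν.rnDeriv μ) x).toReal) ν
  then ENNReal.ofReal (∫ x, Real.log ((ν.rnDeriv μ) x).toReal ∂ν)
  else ∞

/-- The transportation cost inequality `T_p(C)`: `W_p(μ,ν) ≤ √(2 C H(ν,μ))` for every
probability measure `ν`. -/
def TCI {E : Type*} [MetricSpace E] [MeasurableSpace E] (p : ℝ) (C : ℝ) (μ : Measure E) : Prop :=
  ∀ ν : Measure E, IsProbabilityMeasure ν →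
    Wcost p μ ν ^ (1 / p) ≤ (ENNReal.ofReal (2 * C) * relEnt ν μ) ^ (1 / 2 : ℝ)

/-- The measure `ν = h·μ`. -/
def densMeas {Ω : Type*} [MeasurableSpace Ω] (μ : Measure Ω) (h : Ω → ℝ) : Measure Ω :=
  μ.withDensity fun x => ENNReal.ofReal (h x)

/-- The truncated measure `ν_a = (1/ν(h ≤ a)) · h · 1_{h ≤ a} · μ` for `ν = h·μ`. -/
def truncMeas {Ω : Type*} [MeasurableSpace Ω] (μ : Measure Ω) (h : Ω → ℝ) (a : ℝ) : Measure Ω :=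
  ((densMeas μ h) {x | h x ≤ a})⁻¹ • (densMeas μ h).restrict {x | h x ≤ a}

/-- **Proposition 1.14 (Bolley–Villani).** `EI_ε(p)` implies
`W_p^p(ν,μ) ≤ C(ε) (H(ν,μ) + H(ν,μ)^{1/2})` for all probability measures `ν`. -/




lemma hh_nonneg (t : ℝ) (ht : 0 ≤ t) : 0 ≤ t * Real.log t - t + 1 := by
  rcases eq_or_lt_of_le ht with h | h
  · simp [← h]
  · have h1 : Real.log t⁻¹ ≤ t⁻¹ - 1 := Real.log_le_sub_one_of_pos (by positivity)
    rw [Real.log_inv] at h1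
    have h2 : t * (-Real.log t) ≤ t * (t⁻¹ - 1) := by
      exact mul_le_mul_of_nonneg_left h1 ht
    have h3 : t * t⁻¹ = 1 := mul_inv_cancel₀ h.ne'
    nlinarith

lemma sqrt_sub_one_sq_le (t : ℝ) (ht : 0 ≤ t) :
    (Real.sqrt t - 1) ^ 2 ≤ t * Real.log t - t + 1 := by
  set s := Real.sqrt t with hs
  have hs0 : 0 ≤ s := Real.sqrt_nonneg t
  have hst : s ^ 2 = t := Real.sq_sqrt ht
  have hlog : Real.log t = 2 * Real.log s := by
    rw [← hst, Real.log_pow]; push_cast; ring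
  have key : s - 1 ≤ s * Real.log s := by
    rcases eq_or_lt_of_le hs0 with h | h
    · simp [← h]
    · have := Real.log_le_sub_one_of_pos (show (0:ℝ) < s⁻¹ by positivity)
      rw [Real.log_inv] at this
      have h2 : s * (-Real.log s) ≤ s * (s⁻¹ - 1) := mul_le_mul_of_nonneg_left this hs0
      have h3 : s * s⁻¹ = 1 := mul_inv_cancel₀ h.ne'
      nlinarith
  have h4 : s * (s - 1) ≤ s * (s * Real.log s) := mul_le_mul_of_nonneg_left key hs0
  rw [← hst] at hlog ⊢
  rw [hlog]
  nlinarith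

lemma young_exp (s t : ℝ) (hs : 0 ≤ s) (ht : 0 ≤ t) :
    s * t ≤ (Real.exp s - 1) + (t * Real.log t - t + 1) := by
  rcases eq_or_lt_of_le ht with h | h
  · have := Real.one_le_exp hs
    simp [← h]; linarith
  · have h1 : Real.log t + (s - Real.log t) + 1 ≤ Real.exp (Real.log t + (s - Real.log t)) := by
      have := Real.add_one_le_exp (s - Real.log t)
      calc Real.log t + (s - Real.log t) + 1 = s + 1 := by ring
        _ ≤ Real.exp s := by
            have := Real.add_one_le_exp s; linarith
        _ = Real.exp (Real.log t + (s - Real.log t)) := by ring_nf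
    have h2 : t * (s - Real.log t + 1) ≤ t * Real.exp (s - Real.log t) := by
      refine mul_le_mul_of_nonneg_left ?_ ht
      have := Real.add_one_le_exp (s - Real.log t); linarith
    have h3 : t * Real.exp (s - Real.log t) = Real.exp s := by
      rw [Real.exp_sub, Real.exp_log h]; field_simp
    nlinarith [Real.exp_nonneg s]


lemma abs_sub_one_le_sqrt (t : ℝ) (ht : 0 ≤ t) (ht2 : t ≤ 2) :
    |t - 1| ≤ 3 * Real.sqrt (t * Real.log t - t + 1) := by
  have hs0 : 0 ≤ Real.sqrt t := Real.sqrt_nonneg t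
  have hst : Real.sqrt t ^ 2 = t := Real.sq_sqrt ht
  have h1 : |Real.sqrt t - 1| ≤ Real.sqrt (t * Real.log t - t + 1) := by
    rw [← Real.sqrt_sq_eq_abs]
    exact Real.sqrt_le_sqrt (sqrt_sub_one_sq_le t ht)
  have h2 : Real.sqrt t ≤ 2 := by
    have h4 : Real.sqrt t ≤ Real.sqrt 4 := Real.sqrt_le_sqrt (by linarith)
    have : Real.sqrt 4 = 2 := by
      rw [show (4:ℝ) = 2 ^ 2 by norm_num, Real.sqrt_sq (by norm_num : (0:ℝ) ≤ 2)]
    linarith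
  have h3 : |t - 1| = |Real.sqrt t - 1| * (Real.sqrt t + 1) := by
    rw [← abs_of_nonneg (show (0:ℝ) ≤ Real.sqrt t + 1 by linarith), ← abs_mul]
    congr 1
    nlinarith
  rw [h3]
  calc |Real.sqrt t - 1| * (Real.sqrt t + 1)
      ≤ Real.sqrt (t * Real.log t - t + 1) * 3 := by
        refine mul_le_mul h1 (by linarith) (by linarith) (Real.sqrt_nonneg _)
    _ = 3 * Real.sqrt (t * Real.log t - t + 1) := by ring

lemma hh_ge_of_two_lt (t : ℝ) (h2t : 2 < t) :
    3 - 2 * Real.sqrt 2 ≤ t * Real.log t - t + 1 := by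
  have h1 := sqrt_sub_one_sq_le t (by linarith)
  have h2 : Real.sqrt 2 ≤ Real.sqrt t := Real.sqrt_le_sqrt (by linarith)
  have h3 : Real.sqrt 2 ^ 2 = 2 := Real.sq_sqrt (by norm_num)
  have h4 : (1:ℝ) ≤ Real.sqrt 2 := by nlinarith [Real.sqrt_nonneg 2]
  nlinarith

lemma sqrt_two_lower : (1/6 : ℝ) ≤ 3 - 2 * Real.sqrt 2 := by
  have h3 : Real.sqrt 2 ^ 2 = 2 := Real.sq_sqrt (by norm_num)
  have h4 : Real.sqrt 2 ≤ 17/12 := by nlinarith [Real.sqrt_nonneg 2]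
  linarith

lemma rsq_le_exp {ε : ℝ} (hε : 0 < ε) (x : ℝ) (hx : 0 ≤ x) :
    x ^ (2:ℝ) ≤ 4 / ε ^ 2 * Real.exp (ε * x) := by
  have h1 : ε * x / 2 + 1 ≤ Real.exp (ε * x / 2) := Real.add_one_le_exp _
  have h2 : Real.exp (ε * x / 2) ^ 2 = Real.exp (ε * x) := by
    rw [sq, ← Real.exp_add]; ring_nf
  have h0 : 0 ≤ ε * x / 2 := by positivity
  have hx2 : x ^ (2:ℝ) = x ^ 2 := by
    rw [show (2:ℝ) = ((2:ℕ):ℝ) by norm_num, Real.rpow_natCast]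
  rw [hx2]
  have h5 : (ε * x / 2) ^ 2 ≤ Real.exp (ε * x) := by nlinarith
  have hε2 : 0 < ε ^ 2 := by positivity
  rw [div_mul_eq_mul_div, le_div_iff₀ hε2]
  nlinarith

lemma phi_abs_le_on_A {ε φ t : ℝ} (hε : 0 < ε) (hφ : 0 ≤ φ) (h2t : 2 < t) :
    φ * |t - 1| ≤ 2 / ε * ((t * Real.log t - t + 1) + Real.exp (ε / 2 * φ)) := by
  have ht1 : |t - 1| = t - 1 := abs_of_nonneg (by linarith)
  have hy := young_exp (ε / 2 * φ) t (by positivity) (by linarith)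
  have hexp : 0 < Real.exp (ε / 2 * φ) := Real.exp_pos _
  rw [ht1]
  have h6 : φ * (t - 1) ≤ φ * t := by nlinarith
  have h7 : ε / 2 * φ * t ≤ Real.exp (ε / 2 * φ) + (t * Real.log t - t + 1) := by linarith
  have h8 : φ * t = 2 / ε * (ε / 2 * φ * t) := by field_simp
  calc φ * (t - 1) ≤ φ * t := h6
    _ = 2 / ε * (ε / 2 * φ * t) := h8
    _ ≤ 2 / ε * ((t * Real.log t - t + 1) + Real.exp (ε / 2 * φ)) := by
        refine mul_le_mul_of_nonneg_left ?_ (by positivity); linarith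

lemma exp_half_sq {ε φ : ℝ} : Real.exp (ε / 2 * φ) ^ (2:ℝ) = Real.exp (ε * φ) := by
  rw [show (2:ℝ) = ((2:ℕ):ℝ) by norm_num, Real.rpow_natCast, sq, ← Real.exp_add]
  ring_nf

lemma wcost_le_of_coupling {E : Type*} [MetricSpace E] [MeasurableSpace E]
    {p : ℝ} {ν μ : Measure E} (π : Measure (E × E)) (h1 : IsProbabilityMeasure π)
    (h2 : IsCoupling π ν μ) :
    Wcost p ν μ ≤ ∫⁻ z, ENNReal.ofReal (dist z.1 z.2 ^ p) ∂π :=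
  iInf_le_of_le π (iInf_le_of_le h1 (iInf_le_of_le h2 le_rfl))

lemma cost_measurable {E : Type*} [MetricSpace E] [TopologicalSpace.SeparableSpace E] [MeasurableSpace E] [BorelSpace E] {p : ℝ} (hp : 0 ≤ p) :
    Measurable fun z : E × E => ENNReal.ofReal (dist z.1 z.2 ^ p) := by
  haveI : SecondCountableTopology E := UniformSpace.secondCountable_of_separable E
  exact (((Real.continuous_rpow_const hp).measurable).comp
    (measurable_fst.dist measurable_snd)).ennreal_ofReal

lemma phi_measurable {E : Type*} [MetricSpace E] [MeasurableSpace E] [BorelSpace E] {p : ℝ}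
    (hp : 0 ≤ p) (x₀ : E) :
    Measurable fun x : E => ENNReal.ofReal (dist x x₀ ^ p) :=
  (((Real.continuous_rpow_const hp).measurable).comp
    ((continuous_id.dist continuous_const).measurable)).ennreal_ofReal

lemma wcost_le_weighted {E : Type*} [MetricSpace E] [TopologicalSpace.SeparableSpace E] [MeasurableSpace E] [BorelSpace E]
    {p : ℝ} (hp : 1 ≤ p) (x₀ : E) (ν μ s ρ₁ ρ₂ : Measure E)
    [IsProbabilityMeasure ν] [IsProbabilityMeasure μ]
    [IsFiniteMeasure ρ₁] [IsFiniteMeasure ρ₂]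
    (hν : s + ρ₁ = ν) (hμ : s + ρ₂ = μ) (hm : ρ₁ Set.univ = ρ₂ Set.univ) :
    Wcost p ν μ ≤ ENNReal.ofReal (2 ^ (p - 1)) *
      ((∫⁻ x, ENNReal.ofReal (dist x x₀ ^ p) ∂ρ₁) +
       (∫⁻ x, ENNReal.ofReal (dist x x₀ ^ p) ∂ρ₂)) := by
  have hp0 : (0:ℝ) < p := lt_of_lt_of_le one_pos hp
  have hdiag : Measurable fun x : E => (x, x) := measurable_id.prodMk measurable_id
  have hΦ : Measurable fun x : E => ENNReal.ofReal (dist x x₀ ^ p) := phi_measurable hp0.le x₀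
  have hcostm := cost_measurable (E := E) hp0.le
  -- diagonal cost is zero for any measure
  have hdiagcost : ∀ σ : Measure E, ∫⁻ z, ENNReal.ofReal (dist z.1 z.2 ^ p) ∂(σ.map fun x => (x, x)) = 0 := by
    intro σ
    rw [lintegral_map hcostm hdiag]
    simp [Real.zero_rpow hp0.ne']
  set m := ρ₁ Set.univ with hmdef
  have hsum_univ : s Set.univ + m = 1 := by
    have := congrArg (fun τ : Measure E => τ Set.univ) hν
    simpa [Measure.add_apply] using this
  have hm_le : m ≤ 1 := le_trans le_add_self (le_of_eq hsum_univ)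
  have hm_top : m ≠ ∞ := (lt_of_le_of_lt hm_le one_lt_top).ne
  by_cases hm0 : m = 0
  · -- ν = μ = s, use diagonal coupling
    have hρ₁ : ρ₁ = 0 := Measure.measure_univ_eq_zero.mp hm0
    have hρ₂ : ρ₂ = 0 := Measure.measure_univ_eq_zero.mp (hm ▸ hm0)
    have hνμ : ν = μ := by rw [← hν, ← hμ, hρ₁, hρ₂]
    have hcoup : IsCoupling (μ.map fun x => (x, x)) ν μ := by
      constructor
      · rw [Measure.map_map measurable_fst hdiag, hνμ]
        exact Measure.map_id
      · rw [Measure.map_map measurable_snd hdiag]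
        exact Measure.map_id
    have : IsProbabilityMeasure (μ.map fun x => (x, x)) :=
      Measure.isProbabilityMeasure_map hdiag.aemeasurable
    refine le_trans (wcost_le_of_coupling _ this hcoup) ?_
    rw [hdiagcost μ]
    exact zero_le
  · -- general case: glue diagonal on s with product of residuals
    set π : Measure (E × E) := s.map (fun x => (x, x)) + m⁻¹ • ρ₁.prod ρ₂ with hπdef
    have hprod_univ : (ρ₁.prod ρ₂) Set.univ = m * m := by
      rw [← Set.univ_prod_univ, Measure.prod_prod, ← hmdef, ← hm]
    have hπprob : IsProbabilityMeasure π := by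
      constructor
      rw [hπdef]
      rw [Measure.add_apply, Measure.smul_apply, smul_eq_mul, hprod_univ,
        Measure.map_apply hdiag MeasurableSet.univ]
      have : m⁻¹ * (m * m) = m := by
        rw [← mul_assoc, ENNReal.inv_mul_cancel hm0 hm_top, one_mul]
      rw [Set.preimage_univ, this, hsum_univ]
    have hcoup : IsCoupling π ν μ := by
      constructor
      · rw [hπdef, Measure.map_add _ _ measurable_fst,
          Measure.map_map measurable_fst hdiag,
          Measure.map_smul, Measure.map_fst_prod]
        have h1 : (Prod.fst ∘ fun x : E => (x, x)) = id := rfl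
        rw [h1, Measure.map_id, ← hm, smul_smul, ENNReal.inv_mul_cancel hm0 hm_top, one_smul, hν]
      · rw [hπdef, Measure.map_add _ _ measurable_snd,
          Measure.map_map measurable_snd hdiag,
          Measure.map_smul, Measure.map_snd_prod]
        have h1 : (Prod.snd ∘ fun x : E => (x, x)) = id := rfl
        rw [h1, Measure.map_id, hmdef, smul_smul, ENNReal.inv_mul_cancel hm0 hm_top, one_smul, hμ]
    refine le_trans (wcost_le_of_coupling π hπprob hcoup) ?_
    rw [hπdef, lintegral_add_measure, hdiagcost s, zero_add, lintegral_smul_measure]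
    -- bound the product cost
    have hpt : ∀ z : E × E, ENNReal.ofReal (dist z.1 z.2 ^ p) ≤
        ENNReal.ofReal (2 ^ (p - 1)) *
          (ENNReal.ofReal (dist z.1 x₀ ^ p) + ENNReal.ofReal (dist z.2 x₀ ^ p)) := by
      intro z
      rw [← ENNReal.ofReal_rpow_of_nonneg dist_nonneg hp0.le,
        ← ENNReal.ofReal_rpow_of_nonneg dist_nonneg hp0.le,
        ← ENNReal.ofReal_rpow_of_nonneg dist_nonneg hp0.le]
      calc ENNReal.ofReal (dist z.1 z.2) ^ p
          ≤ (ENNReal.ofReal (dist z.1 x₀) + ENNReal.ofReal (dist z.2 x₀)) ^ p := by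
            refine ENNReal.rpow_le_rpow ?_ hp0.le
            rw [← ENNReal.ofReal_add dist_nonneg dist_nonneg]
            refine ENNReal.ofReal_le_ofReal ?_
            rw [dist_comm z.2 x₀]
            exact dist_triangle z.1 x₀ z.2
        _ ≤ (2:ℝ≥0∞) ^ (p - 1) *
              (ENNReal.ofReal (dist z.1 x₀) ^ p + ENNReal.ofReal (dist z.2 x₀) ^ p) :=
            ENNReal.rpow_add_le_mul_rpow_add_rpow _ _ hp
        _ = ENNReal.ofReal (2 ^ (p - 1)) *
              (ENNReal.ofReal (dist z.1 x₀) ^ p + ENNReal.ofReal (dist z.2 x₀) ^ p) := by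
            congr 1
            rw [← ENNReal.ofReal_rpow_of_pos two_pos]
            norm_num
    have hfst : ∫⁻ z : E × E, ENNReal.ofReal (dist z.1 x₀ ^ p) ∂(ρ₁.prod ρ₂) =
        m * ∫⁻ x, ENNReal.ofReal (dist x x₀ ^ p) ∂ρ₁ := by
      rw [← lintegral_map hΦ measurable_fst, Measure.map_fst_prod, ← hm,
        lintegral_smul_measure, smul_eq_mul]
    have hsnd : ∫⁻ z : E × E, ENNReal.ofReal (dist z.2 x₀ ^ p) ∂(ρ₁.prod ρ₂) =
        m * ∫⁻ x, ENNReal.ofReal (dist x x₀ ^ p) ∂ρ₂ := by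
      rw [← lintegral_map hΦ measurable_snd, Measure.map_snd_prod, hmdef,
        lintegral_smul_measure, smul_eq_mul]
    calc m⁻¹ * ∫⁻ z, ENNReal.ofReal (dist z.1 z.2 ^ p) ∂(ρ₁.prod ρ₂)
        ≤ m⁻¹ * ∫⁻ z : E × E, ENNReal.ofReal (2 ^ (p - 1)) *
            (ENNReal.ofReal (dist z.1 x₀ ^ p) + ENNReal.ofReal (dist z.2 x₀ ^ p)) ∂(ρ₁.prod ρ₂) :=
          mul_le_mul_right (lintegral_mono hpt) _
      _ = m⁻¹ * (ENNReal.ofReal (2 ^ (p - 1)) *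
            (m * (∫⁻ x, ENNReal.ofReal (dist x x₀ ^ p) ∂ρ₁) +
             m * (∫⁻ x, ENNReal.ofReal (dist x x₀ ^ p) ∂ρ₂))) := by
          have hmeas1 : Measurable fun z : E × E => ENNReal.ofReal (dist z.1 x₀ ^ p) :=
            hΦ.comp measurable_fst
          have hmeas2 : Measurable fun z : E × E => ENNReal.ofReal (dist z.2 x₀ ^ p) :=
            hΦ.comp measurable_snd
          rw [lintegral_const_mul _ (f := fun z : E × E => ENNReal.ofReal (dist z.1 x₀ ^ p) + ENNReal.ofReal (dist z.2 x₀ ^ p)) (hmeas1.add hmeas2), lintegral_add_left hmeas1, hfst, hsnd]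
      _ = ENNReal.ofReal (2 ^ (p - 1)) *
            ((∫⁻ x, ENNReal.ofReal (dist x x₀ ^ p) ∂ρ₁) +
             (∫⁻ x, ENNReal.ofReal (dist x x₀ ^ p) ∂ρ₂)) := by
          rw [← mul_add m, ← mul_assoc, ← mul_assoc, mul_comm m⁻¹ _, mul_assoc _ m⁻¹ m,
            ENNReal.inv_mul_cancel hm0 hm_top, mul_one]


lemma entropy_lintegral_eq {E : Type*} [MeasurableSpace E] (μ ν : Measure E)
    [IsProbabilityMeasure μ] [IsProbabilityMeasure ν] (hac : ν ≪ μ)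
    (hint : Integrable (fun x => Real.log ((ν.rnDeriv μ) x).toReal) ν) :
    ∫⁻ x, ENNReal.ofReal (((ν.rnDeriv μ) x).toReal * Real.log (((ν.rnDeriv μ) x).toReal)
        - ((ν.rnDeriv μ) x).toReal + 1) ∂μ
      = ENNReal.ofReal (∫ x, Real.log (((ν.rnDeriv μ) x).toReal) ∂ν) := by
  set u := ν.rnDeriv μ with hu
  have hum : Measurable u := Measure.measurable_rnDeriv ν μ
  set f : E → ℝ := fun x => (u x).toReal with hf
  have hfm : Measurable f := hum.ennreal_toReal
  have hfnn : ∀ x, 0 ≤ f x := fun x => ENNReal.toReal_nonneg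
  have hlt : ∀ᵐ x ∂μ, u x < ∞ := Measure.rnDeriv_lt_top ν μ
  have hν_eq : μ.withDensity u = ν := Measure.withDensity_rnDeriv_eq ν μ hac
  have hae : (fun x => ((f x).toNNReal : ℝ≥0∞)) =ᵐ[μ] u := by
    filter_upwards [hlt] with x hx
    simp only [hf, ENNReal.ofReal]
    exact ENNReal.ofReal_toReal hx.ne
  have hν_eq2 : μ.withDensity (fun x => ((f x).toNNReal : ℝ≥0∞)) = ν := by
    rw [withDensity_congr_ae hae, hν_eq]
  have htoNN : ∀ x, ((f x).toNNReal : ℝ) = f x := fun x => Real.coe_toNNReal _ (hfnn x)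
  have hfNNm : AEMeasurable (fun x => (f x).toNNReal) μ := hfm.real_toNNReal.aemeasurable
  -- integrability of f * log f
  have h1 : Integrable (fun x => Real.log (f x)) (μ.withDensity (fun x => ((f x).toNNReal : ℝ≥0∞))) := by
    rw [hν_eq2]; exact hint
  rw [integrable_withDensity_iff_integrable_smul₀ hfNNm] at h1
  have hmul : Integrable (fun x => f x * Real.log (f x)) μ := by
    refine h1.congr (ae_of_all _ fun x => ?_)
    simp only [NNReal.smul_def, htoNN x, smul_eq_mul]
  -- integral transfer
  have h2 : ∫ x, Real.log (f x) ∂ν = ∫ x, f x * Real.log (f x) ∂μ := by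
    rw [← hν_eq2, integral_withDensity_eq_integral_smul₀ hfNNm]
    refine integral_congr_ae (ae_of_all _ fun x => ?_)
    simp only [NNReal.smul_def, htoNN x, smul_eq_mul]
  -- Integrable f and its integral
  have hlint : ∫⁻ x, u x ∂μ = 1 := by
    rw [hu, Measure.lintegral_rnDeriv hac]; exact measure_univ
  have hf_int : Integrable f μ := by
    refine integrable_toReal_of_lintegral_ne_top hum.aemeasurable ?_
    rw [hlint]; exact one_ne_top
  have hf_eq_one : ∫ x, f x ∂μ = 1 := by
    rw [hf]
    rw [integral_toReal hum.aemeasurable hlt, hlint]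
    simp
  have hsub : Integrable (fun x => f x * Real.log (f x) - f x) μ := hmul.sub hf_int
  have hhint : Integrable (fun x => f x * Real.log (f x) - f x + 1) μ :=
    hsub.add (integrable_const 1)
  have hnn : 0 ≤ᵐ[μ] fun x => f x * Real.log (f x) - f x + 1 :=
    ae_of_all _ fun x => hh_nonneg _ (hfnn x)
  rw [← ofReal_integral_eq_lintegral_ofReal hhint hnn]
  congr 1
  rw [integral_add hsub (integrable_const 1), integral_sub hmul hf_int,
    hf_eq_one, integral_const, probReal_univ, h2]
  simp


lemma weighted_tv_bound {E : Type*} [MeasurableSpace E] (μ : Measure E)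
    {φ f : E → ℝ} (hφm : Measurable φ) (hφ0 : ∀ x, 0 ≤ φ x)
    (hfm : Measurable f) (hf0 : ∀ x, 0 ≤ f x) {ε : ℝ} (hε : 0 < ε) :
    ∫⁻ x, ENNReal.ofReal (φ x) * ENNReal.ofReal |f x - 1| ∂μ ≤
      ENNReal.ofReal 3 * (ENNReal.ofReal (4 / ε ^ 2) *
          (∫⁻ x, ENNReal.ofReal (Real.exp (ε * φ x)) ∂μ)) ^ (1/2:ℝ) *
        (∫⁻ x, ENNReal.ofReal (f x * Real.log (f x) - f x + 1) ∂μ) ^ (1/2:ℝ)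
      + ENNReal.ofReal (2 / ε) *
        ((∫⁻ x, ENNReal.ofReal (f x * Real.log (f x) - f x + 1) ∂μ)
         + (ENNReal.ofReal 6 * (∫⁻ x, ENNReal.ofReal (f x * Real.log (f x) - f x + 1) ∂μ)) ^ (1/2:ℝ)
           * (∫⁻ x, ENNReal.ofReal (Real.exp (ε * φ x)) ∂μ) ^ (1/2:ℝ)) := by
  set I := ∫⁻ x, ENNReal.ofReal (Real.exp (ε * φ x)) ∂μ with hI
  set H := ∫⁻ x, ENNReal.ofReal (f x * Real.log (f x) - f x + 1) ∂μ with hH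
  have hconj : Real.HolderConjugate 2 2 := ⟨by norm_num, by norm_num, by norm_num⟩
  have hhhm : Measurable fun x => f x * Real.log (f x) - f x + 1 :=
    ((hfm.mul (Real.measurable_log.comp hfm)).sub hfm).add measurable_const
  have hφem : Measurable fun x => ENNReal.ofReal (φ x) := hφm.ennreal_ofReal
  have hsqm : Measurable fun x => ENNReal.ofReal (Real.sqrt (f x * Real.log (f x) - f x + 1)) :=
    (Real.continuous_sqrt.measurable.comp hhhm).ennreal_ofReal
  have hexpIm : Measurable fun x => ENNReal.ofReal (Real.exp (ε * φ x)) :=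
    (Real.measurable_exp.comp (measurable_const.mul hφm)).ennreal_ofReal
  set A := {x | 2 < f x} with hAdef
  have hA : MeasurableSet A := measurableSet_lt measurable_const hfm
  -- the Hölder (small density) part
  have h_on_Ac : ∫⁻ x in Aᶜ, ENNReal.ofReal (φ x) * ENNReal.ofReal |f x - 1| ∂μ ≤
      ENNReal.ofReal 3 * (ENNReal.ofReal (4 / ε ^ 2) * I) ^ (1/2:ℝ) * H ^ (1/2:ℝ) := by
    have hGm : Measurable fun x => ENNReal.ofReal 3 *
        (ENNReal.ofReal (φ x) * ENNReal.ofReal (Real.sqrt (f x * Real.log (f x) - f x + 1))) :=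
      measurable_const.mul (hφem.mul hsqm)
    calc ∫⁻ x in Aᶜ, ENNReal.ofReal (φ x) * ENNReal.ofReal |f x - 1| ∂μ
        ≤ ∫⁻ x in Aᶜ, ENNReal.ofReal 3 *
            (ENNReal.ofReal (φ x) * ENNReal.ofReal (Real.sqrt (f x * Real.log (f x) - f x + 1))) ∂μ := by
          refine setLIntegral_mono hGm fun x hx => ?_
          have hx2 : f x ≤ 2 := le_of_not_gt hx
          calc ENNReal.ofReal (φ x) * ENNReal.ofReal |f x - 1|
              ≤ ENNReal.ofReal (φ x) *
                  ENNReal.ofReal (3 * Real.sqrt (f x * Real.log (f x) - f x + 1)) :=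
                mul_le_mul_right (ENNReal.ofReal_le_ofReal
                  (abs_sub_one_le_sqrt (f x) (hf0 x) hx2)) _
            _ = ENNReal.ofReal 3 * (ENNReal.ofReal (φ x) *
                  ENNReal.ofReal (Real.sqrt (f x * Real.log (f x) - f x + 1))) := by
                rw [ENNReal.ofReal_mul (by norm_num : (0:ℝ) ≤ 3)]
                ring
      _ ≤ ∫⁻ x, ENNReal.ofReal 3 *
            (ENNReal.ofReal (φ x) * ENNReal.ofReal (Real.sqrt (f x * Real.log (f x) - f x + 1))) ∂μ :=
          setLIntegral_le_lintegral _ _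
      _ = ENNReal.ofReal 3 * ∫⁻ x,
            ENNReal.ofReal (φ x) * ENNReal.ofReal (Real.sqrt (f x * Real.log (f x) - f x + 1)) ∂μ := by
          rw [lintegral_const_mul _ (f := fun x => ENNReal.ofReal (φ x) * ENNReal.ofReal (Real.sqrt (f x * Real.log (f x) - f x + 1))) (hφem.mul hsqm)]
      _ ≤ ENNReal.ofReal 3 * ((∫⁻ x, ENNReal.ofReal (φ x) ^ (2:ℝ) ∂μ) ^ (1/2:ℝ) *
            (∫⁻ x, ENNReal.ofReal (Real.sqrt (f x * Real.log (f x) - f x + 1)) ^ (2:ℝ) ∂μ) ^ (1/2:ℝ)) := by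
          refine mul_le_mul_right ?_ _
          exact ENNReal.lintegral_mul_le_Lp_mul_Lq μ hconj hφem.aemeasurable hsqm.aemeasurable
      _ = ENNReal.ofReal 3 * ((∫⁻ x, ENNReal.ofReal (φ x) ^ (2:ℝ) ∂μ) ^ (1/2:ℝ) * H ^ (1/2:ℝ)) := by
          have h6 : (∫⁻ x, ENNReal.ofReal (Real.sqrt (f x * Real.log (f x) - f x + 1)) ^ (2:ℝ) ∂μ)
              = H := by
            refine lintegral_congr fun x => ?_
            rw [ENNReal.ofReal_rpow_of_nonneg (Real.sqrt_nonneg _) (by norm_num : (0:ℝ) ≤ 2)]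
            congr 1
            rw [show (2:ℝ) = ((2:ℕ):ℝ) by norm_num, Real.rpow_natCast,
              Real.sq_sqrt (hh_nonneg _ (hf0 x))]
          rw [h6]
      _ ≤ ENNReal.ofReal 3 * ((ENNReal.ofReal (4 / ε ^ 2) * I) ^ (1/2:ℝ) * H ^ (1/2:ℝ)) := by
          refine mul_le_mul_right (mul_le_mul_left (ENNReal.rpow_le_rpow ?_ (by norm_num)) _) _
          calc ∫⁻ x, ENNReal.ofReal (φ x) ^ (2:ℝ) ∂μ
              ≤ ∫⁻ x, ENNReal.ofReal (4 / ε ^ 2) * ENNReal.ofReal (Real.exp (ε * φ x)) ∂μ := by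
                refine lintegral_mono fun x => ?_
                rw [ENNReal.ofReal_rpow_of_nonneg (hφ0 x) (by norm_num : (0:ℝ) ≤ 2),
                  ← ENNReal.ofReal_mul (by positivity)]
                exact ENNReal.ofReal_le_ofReal (rsq_le_exp hε (φ x) (hφ0 x))
            _ = ENNReal.ofReal (4 / ε ^ 2) * I := by
                rw [lintegral_const_mul _ hexpIm]
      _ = ENNReal.ofReal 3 * (ENNReal.ofReal (4 / ε ^ 2) * I) ^ (1/2:ℝ) * H ^ (1/2:ℝ) := by ring
  -- the entropy (large density) part
  have h_on_A : ∫⁻ x in A, ENNReal.ofReal (φ x) * ENNReal.ofReal |f x - 1| ∂μ ≤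
      ENNReal.ofReal (2 / ε) * (H + (ENNReal.ofReal 6 * H) ^ (1/2:ℝ) * I ^ (1/2:ℝ)) := by
    have hexpm : Measurable fun x => ENNReal.ofReal (Real.exp (ε / 2 * φ x)) :=
      (Real.measurable_exp.comp (measurable_const.mul hφm)).ennreal_ofReal
    have hμA : μ A ≤ ENNReal.ofReal 6 * H := by
      have hc_pos : (0:ℝ) < 3 - 2 * Real.sqrt 2 := lt_of_lt_of_le (by norm_num) sqrt_two_lower
      have step : ENNReal.ofReal (3 - 2 * Real.sqrt 2) * μ A ≤ H := by
        calc ENNReal.ofReal (3 - 2 * Real.sqrt 2) * μ A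
            = ∫⁻ _ in A, ENNReal.ofReal (3 - 2 * Real.sqrt 2) ∂μ := (setLIntegral_const _ _).symm
          _ ≤ ∫⁻ x in A, ENNReal.ofReal (f x * Real.log (f x) - f x + 1) ∂μ := by
              refine setLIntegral_mono hhhm.ennreal_ofReal fun x hx => ?_
              exact ENNReal.ofReal_le_ofReal (hh_ge_of_two_lt (f x) hx)
          _ ≤ H := setLIntegral_le_lintegral _ _
      have hcne : ENNReal.ofReal (3 - 2 * Real.sqrt 2) ≠ 0 :=
        (ENNReal.ofReal_pos.mpr hc_pos).ne'
      calc μ A = (ENNReal.ofReal (3 - 2 * Real.sqrt 2))⁻¹ *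
            (ENNReal.ofReal (3 - 2 * Real.sqrt 2) * μ A) := by
            rw [← mul_assoc, ENNReal.inv_mul_cancel hcne ofReal_ne_top, one_mul]
        _ ≤ (ENNReal.ofReal (3 - 2 * Real.sqrt 2))⁻¹ * H := mul_le_mul_right step _
        _ ≤ ENNReal.ofReal 6 * H := by
            refine mul_le_mul_left ?_ _
            rw [← ENNReal.ofReal_inv_of_pos hc_pos]
            refine ENNReal.ofReal_le_ofReal ?_
            rw [show (6:ℝ) = (1/6)⁻¹ by norm_num]
            exact inv_anti₀ (by norm_num) sqrt_two_lower
    have hexp_half : ∫⁻ x in A, ENNReal.ofReal (Real.exp (ε / 2 * φ x)) ∂μ ≤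
        (ENNReal.ofReal 6 * H) ^ (1/2:ℝ) * I ^ (1/2:ℝ) := by
      have hind : ∫⁻ x in A, ENNReal.ofReal (Real.exp (ε / 2 * φ x)) ∂μ =
          ∫⁻ x, (A.indicator (fun _ => (1:ℝ≥0∞)) x) * ENNReal.ofReal (Real.exp (ε / 2 * φ x)) ∂μ := by
        rw [← lintegral_indicator hA]
        refine lintegral_congr fun x => ?_
        by_cases hx : x ∈ A <;> simp [Set.indicator_apply, hx]
      rw [hind]
      calc ∫⁻ x, (A.indicator (fun _ => (1:ℝ≥0∞)) x) * ENNReal.ofReal (Real.exp (ε / 2 * φ x)) ∂μ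
          ≤ (∫⁻ x, (A.indicator (fun _ => (1:ℝ≥0∞)) x) ^ (2:ℝ) ∂μ) ^ (1/2:ℝ) *
            (∫⁻ x, ENNReal.ofReal (Real.exp (ε / 2 * φ x)) ^ (2:ℝ) ∂μ) ^ (1/2:ℝ) :=
            ENNReal.lintegral_mul_le_Lp_mul_Lq μ hconj
              ((measurable_one.indicator hA)).aemeasurable hexpm.aemeasurable
        _ = (μ A) ^ (1/2:ℝ) * I ^ (1/2:ℝ) := by
            congr 2
            · rw [← lintegral_indicator_one hA]
              refine lintegral_congr fun x => ?_
              by_cases hx : x ∈ A <;>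
                simp [Set.indicator_apply, hx, ENNReal.zero_rpow_of_pos (by norm_num : (0:ℝ) < 2)]
            · refine lintegral_congr fun x => ?_
              rw [ENNReal.ofReal_rpow_of_nonneg (Real.exp_nonneg _) (by norm_num : (0:ℝ) ≤ 2),
                exp_half_sq]
        _ ≤ (ENNReal.ofReal 6 * H) ^ (1/2:ℝ) * I ^ (1/2:ℝ) :=
            mul_le_mul_left (ENNReal.rpow_le_rpow hμA (by norm_num)) _
    calc ∫⁻ x in A, ENNReal.ofReal (φ x) * ENNReal.ofReal |f x - 1| ∂μ
        ≤ ∫⁻ x in A, ENNReal.ofReal (2 / ε) *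
            (ENNReal.ofReal (f x * Real.log (f x) - f x + 1) +
             ENNReal.ofReal (Real.exp (ε / 2 * φ x))) ∂μ := by
          refine setLIntegral_mono (measurable_const.mul (hhhm.ennreal_ofReal.add hexpm))
            fun x hx => ?_
          rw [← ENNReal.ofReal_mul (hφ0 x),
            ← ENNReal.ofReal_add (hh_nonneg _ (hf0 x)) (Real.exp_nonneg _),
            ← ENNReal.ofReal_mul (by positivity : (0:ℝ) ≤ 2 / ε)]
          exact ENNReal.ofReal_le_ofReal (phi_abs_le_on_A hε (hφ0 x) hx)
      _ = ENNReal.ofReal (2 / ε) *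
            ((∫⁻ x in A, ENNReal.ofReal (f x * Real.log (f x) - f x + 1) ∂μ) +
             ∫⁻ x in A, ENNReal.ofReal (Real.exp (ε / 2 * φ x)) ∂μ) := by
          rw [lintegral_const_mul _ (f := fun x => ENNReal.ofReal (f x * Real.log (f x) - f x + 1) + ENNReal.ofReal (Real.exp (ε / 2 * φ x))) (hhhm.ennreal_ofReal.add hexpm),
            lintegral_add_left hhhm.ennreal_ofReal]
      _ ≤ ENNReal.ofReal (2 / ε) * (H + (ENNReal.ofReal 6 * H) ^ (1/2:ℝ) * I ^ (1/2:ℝ)) := by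
          exact mul_le_mul_right (add_le_add (setLIntegral_le_lintegral _ _) hexp_half) _
  calc ∫⁻ x, ENNReal.ofReal (φ x) * ENNReal.ofReal |f x - 1| ∂μ
      = (∫⁻ x in A, ENNReal.ofReal (φ x) * ENNReal.ofReal |f x - 1| ∂μ) +
        ∫⁻ x in Aᶜ, ENNReal.ofReal (φ x) * ENNReal.ofReal |f x - 1| ∂μ :=
        (lintegral_add_compl _ hA).symm
    _ ≤ ENNReal.ofReal (2 / ε) * (H + (ENNReal.ofReal 6 * H) ^ (1/2:ℝ) * I ^ (1/2:ℝ)) +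
        ENNReal.ofReal 3 * (ENNReal.ofReal (4 / ε ^ 2) * I) ^ (1/2:ℝ) * H ^ (1/2:ℝ) :=
        add_le_add h_on_A h_on_Ac
    _ = _ := by rw [add_comm]

theorem bolley_villani
    {E : Type*} [MetricSpace E] [CompleteSpace E] [TopologicalSpace.SeparableSpace E]
    [MeasurableSpace E] [BorelSpace E]
    (μ : Measure E) (hprob : IsProbabilityMeasure μ)
    (p : ℝ) (hp : 1 ≤ p) (ε : ℝ) (hε : 0 < ε) (x₀ : E)
    (hEI : Integrable (fun x => Real.exp (ε * dist x x₀ ^ p)) μ) :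
    ∃ C : ℝ, ∀ ν : Measure E, IsProbabilityMeasure ν →
      Wcost p ν μ ≤
        ENNReal.ofReal C * (relEnt ν μ + relEnt ν μ ^ (1 / 2 : ℝ)) := by
  have hp0 : (0:ℝ) < p := lt_of_lt_of_le one_pos hp
  set I : ℝ≥0∞ := ∫⁻ x, ENNReal.ofReal (Real.exp (ε * dist x x₀ ^ p)) ∂μ with hIdef
  have hIfin : I ≠ ⊤ := by
    rw [hIdef, ← ofReal_integral_eq_lintegral_ofReal hEI
      (ae_of_all _ fun x => Real.exp_nonneg _)]
    exact ofReal_ne_top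
  set c₁ : ℝ≥0∞ := ENNReal.ofReal (2 ^ (p-1)) *
    (ENNReal.ofReal 3 * (ENNReal.ofReal (4 / ε ^ 2) * I) ^ (1/2:ℝ) +
     ENNReal.ofReal (2 / ε) * (ENNReal.ofReal 6) ^ (1/2:ℝ) * I ^ (1/2:ℝ)) with hc₁def
  set c₂ : ℝ≥0∞ := ENNReal.ofReal (2 ^ (p-1)) * ENNReal.ofReal (2 / ε) with hc₂def
  have hc₁fin : c₁ ≠ ⊤ := by
    rw [hc₁def]
    refine ENNReal.mul_ne_top ofReal_ne_top (ENNReal.add_ne_top.mpr ⟨?_, ?_⟩)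
    · exact ENNReal.mul_ne_top ofReal_ne_top
        (ENNReal.rpow_ne_top_of_nonneg (by norm_num) (ENNReal.mul_ne_top ofReal_ne_top hIfin))
    · exact ENNReal.mul_ne_top
        (ENNReal.mul_ne_top ofReal_ne_top
          (ENNReal.rpow_ne_top_of_nonneg (by norm_num) ofReal_ne_top))
        (ENNReal.rpow_ne_top_of_nonneg (by norm_num) hIfin)
  have hc₂fin : c₂ ≠ ⊤ := ENNReal.mul_ne_top ofReal_ne_top ofReal_ne_top
  set C : ℝ := (c₁ + c₂).toReal + 1 with hCdef
  have hCpos : 0 < C := by positivity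
  have hsumfin : c₁ + c₂ ≠ ⊤ := ENNReal.add_ne_top.mpr ⟨hc₁fin, hc₂fin⟩
  have hsum_eq : c₁ + c₂ = ENNReal.ofReal ((c₁ + c₂).toReal) := (ENNReal.ofReal_toReal hsumfin).symm
  have hCle : ENNReal.ofReal ((c₁ + c₂).toReal) ≤ ENNReal.ofReal C :=
    ENNReal.ofReal_le_ofReal (by rw [hCdef]; linarith)
  have hc₁C : c₁ ≤ ENNReal.ofReal C := le_trans (le_trans le_self_add hsum_eq.le) hCle
  have hc₂C : c₂ ≤ ENNReal.ofReal C := le_trans (le_trans le_add_self hsum_eq.le) hCle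
  refine ⟨C, fun ν hν => ?_⟩
  by_cases hcond : ν ≪ μ ∧ Integrable (fun x => Real.log ((ν.rnDeriv μ) x).toReal) ν
  swap
  · rw [relEnt, if_neg hcond]
    have : (⊤:ℝ≥0∞) + ⊤ ^ (1/2:ℝ) = ⊤ := by
      rw [ENNReal.top_rpow_of_pos (by norm_num)]; simp
    rw [this, ENNReal.mul_top (ENNReal.ofReal_pos.mpr hCpos).ne']
    exact le_top
  obtain ⟨hac, hint⟩ := hcond
  rw [relEnt, if_pos ⟨hac, hint⟩]
  set H : ℝ≥0∞ := ENNReal.ofReal (∫ x, Real.log ((ν.rnDeriv μ) x).toReal ∂ν) with hHdef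
  set u : E → ℝ≥0∞ := ν.rnDeriv μ with hu
  have hum : Measurable u := Measure.measurable_rnDeriv ν μ
  set f : E → ℝ := fun x => (u x).toReal with hf
  have hfm : Measurable f := hum.ennreal_toReal
  have hf0 : ∀ x, 0 ≤ f x := fun x => ENNReal.toReal_nonneg
  have hφm : Measurable fun x : E => dist x x₀ ^ p :=
    (Real.continuous_rpow_const hp0.le).measurable.comp
      ((continuous_id.dist continuous_const).measurable)
  have hφ0 : ∀ x : E, 0 ≤ dist x x₀ ^ p := fun x => Real.rpow_nonneg dist_nonneg p
  have hkey : ∫⁻ x, ENNReal.ofReal (f x * Real.log (f x) - f x + 1) ∂μ = H :=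
    entropy_lintegral_eq μ ν hac hint
  -- construct the decomposition
  have hν_eq : μ.withDensity u = ν := Measure.withDensity_rnDeriv_eq ν μ hac
  have hminm : Measurable fun x => min (u x) 1 := hum.min measurable_const
  have hg₁m : Measurable fun x => u x - min (u x) 1 := hum.sub hminm
  have hg₂m : Measurable fun x => 1 - min (u x) 1 := measurable_const.sub hminm
  set s : Measure E := μ.withDensity (fun x => min (u x) 1) with hs
  set ρ₁ : Measure E := μ.withDensity (fun x => u x - min (u x) 1) with hρ₁
  set ρ₂ : Measure E := μ.withDensity (fun x => 1 - min (u x) 1) with hρ₂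
  have hlint_u : ∫⁻ x, u x ∂μ = 1 := by
    rw [hu, Measure.lintegral_rnDeriv hac]; exact measure_univ
  have hlint_min_le : ∫⁻ x, min (u x) 1 ∂μ ≤ 1 := by
    calc ∫⁻ x, min (u x) 1 ∂μ ≤ ∫⁻ x, u x ∂μ := lintegral_mono fun x => min_le_left _ _
      _ = 1 := hlint_u
  have hlint_min_ne : ∫⁻ x, min (u x) 1 ∂μ ≠ ⊤ := (lt_of_le_of_lt hlint_min_le one_lt_top).ne
  have hρ₁univ : ρ₁ Set.univ = 1 - ∫⁻ x, min (u x) 1 ∂μ := by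
    rw [hρ₁, withDensity_apply _ MeasurableSet.univ, Measure.restrict_univ,
      lintegral_sub hminm hlint_min_ne (ae_of_all _ fun x => min_le_left _ _), hlint_u]
  have hρ₂univ : ρ₂ Set.univ = 1 - ∫⁻ x, min (u x) 1 ∂μ := by
    rw [hρ₂, withDensity_apply _ MeasurableSet.univ, Measure.restrict_univ,
      lintegral_sub hminm hlint_min_ne (ae_of_all _ fun x => min_le_right _ _),
      lintegral_one, measure_univ]
  have hm_eq : ρ₁ Set.univ = ρ₂ Set.univ := by rw [hρ₁univ, hρ₂univ]
  have hfin₁ : IsFiniteMeasure ρ₁ := by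
    constructor
    rw [hρ₁univ]
    exact lt_of_le_of_lt tsub_le_self one_lt_top
  have hfin₂ : IsFiniteMeasure ρ₂ := by
    constructor
    rw [hρ₂univ]
    exact lt_of_le_of_lt tsub_le_self one_lt_top
  have hsum₁ : s + ρ₁ = ν := by
    rw [hs, hρ₁, ← withDensity_add_left hminm]
    rw [show ((fun x => min (u x) 1) + fun x => u x - min (u x) 1) = u from
      funext fun x => add_tsub_cancel_of_le (min_le_left _ _)]
    exact hν_eq
  have hsum₂ : s + ρ₂ = μ := by
    rw [hs, hρ₂, ← withDensity_add_left hminm]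
    rw [show ((fun x => min (u x) 1) + fun x => 1 - min (u x) 1) = fun _ => (1:ℝ≥0∞) from
      funext fun x => add_tsub_cancel_of_le (min_le_right _ _)]
    exact withDensity_one
  have hstep1 := wcost_le_weighted hp x₀ ν μ s ρ₁ ρ₂ hsum₁ hsum₂ hm_eq
  -- rewrite the weighted masses as one integral against μ
  have hΦm : Measurable fun x : E => ENNReal.ofReal (dist x x₀ ^ p) := hφm.ennreal_ofReal
  have hw₁ : ∫⁻ x, ENNReal.ofReal (dist x x₀ ^ p) ∂ρ₁ =
      ∫⁻ x, (u x - min (u x) 1) * ENNReal.ofReal (dist x x₀ ^ p) ∂μ := by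
    rw [hρ₁, lintegral_withDensity_eq_lintegral_mul _ hg₁m hΦm]; rfl
  have hw₂ : ∫⁻ x, ENNReal.ofReal (dist x x₀ ^ p) ∂ρ₂ =
      ∫⁻ x, (1 - min (u x) 1) * ENNReal.ofReal (dist x x₀ ^ p) ∂μ := by
    rw [hρ₂, lintegral_withDensity_eq_lintegral_mul _ hg₂m hΦm]; rfl
  have hg₁Φm : Measurable fun x => (u x - min (u x) 1) * ENNReal.ofReal (dist x x₀ ^ p) :=
    hg₁m.mul hΦm
  have hadd : (∫⁻ x, ENNReal.ofReal (dist x x₀ ^ p) ∂ρ₁) +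
      (∫⁻ x, ENNReal.ofReal (dist x x₀ ^ p) ∂ρ₂) =
      ∫⁻ x, ((u x - min (u x) 1) * ENNReal.ofReal (dist x x₀ ^ p) +
        (1 - min (u x) 1) * ENNReal.ofReal (dist x x₀ ^ p)) ∂μ := by
    rw [hw₁, hw₂, lintegral_add_left hg₁Φm]
  have hae : ∫⁻ x, ((u x - min (u x) 1) * ENNReal.ofReal (dist x x₀ ^ p) +
        (1 - min (u x) 1) * ENNReal.ofReal (dist x x₀ ^ p)) ∂μ =
      ∫⁻ x, ENNReal.ofReal (dist x x₀ ^ p) * ENNReal.ofReal |f x - 1| ∂μ := by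
    refine lintegral_congr_ae ?_
    filter_upwards [Measure.rnDeriv_lt_top ν μ] with x hx
    have hxne : u x ≠ ⊤ := hx.ne
    have huor : ENNReal.ofReal (f x) = u x := ENNReal.ofReal_toReal hxne
    rcases le_total (u x) 1 with hle | hge
    · have h1 : min (u x) 1 = u x := min_eq_left hle
      have hf1 : f x ≤ 1 := by
        have := ENNReal.toReal_mono one_ne_top hle
        simpa using this
      rw [h1, tsub_self, zero_mul, zero_add, mul_comm]
      congr 1
      rw [show |f x - 1| = 1 - f x by rw [abs_of_nonpos (by linarith)]; ring,
        ENNReal.ofReal_sub _ (hf0 x), ENNReal.ofReal_one, huor]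
    · have h1 : min (u x) 1 = 1 := min_eq_right hge
      have hf1 : 1 ≤ f x := by
        have := ENNReal.toReal_mono hxne hge
        simpa using this
      rw [h1, tsub_self, zero_mul, add_zero, mul_comm]
      congr 1
      rw [show |f x - 1| = f x - 1 by rw [abs_of_nonneg (by linarith)],
        ENNReal.ofReal_sub _ (by norm_num : (0:ℝ) ≤ 1), ENNReal.ofReal_one, huor]
  have hstep2 := weighted_tv_bound μ hφm hφ0 hfm hf0 hε
  rw [hkey] at hstep2
  calc Wcost p ν μ
      ≤ ENNReal.ofReal (2 ^ (p-1)) *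
        ((∫⁻ x, ENNReal.ofReal (dist x x₀ ^ p) ∂ρ₁) +
         (∫⁻ x, ENNReal.ofReal (dist x x₀ ^ p) ∂ρ₂)) := hstep1
    _ = ENNReal.ofReal (2 ^ (p-1)) *
        ∫⁻ x, ENNReal.ofReal (dist x x₀ ^ p) * ENNReal.ofReal |f x - 1| ∂μ := by
        rw [hadd, hae]
    _ ≤ ENNReal.ofReal (2 ^ (p-1)) *
        (ENNReal.ofReal 3 * (ENNReal.ofReal (4 / ε ^ 2) * I) ^ (1/2:ℝ) * H ^ (1/2:ℝ)
         + ENNReal.ofReal (2 / ε) *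
           (H + (ENNReal.ofReal 6 * H) ^ (1/2:ℝ) * I ^ (1/2:ℝ))) :=
        mul_le_mul_right hstep2 _
    _ = c₁ * H ^ (1/2:ℝ) + c₂ * H := by
        rw [hc₁def, hc₂def,
          ENNReal.mul_rpow_of_nonneg (ENNReal.ofReal 6) H (by norm_num : (0:ℝ) ≤ 1/2)]
        ring
    _ ≤ ENNReal.ofReal C * H ^ (1/2:ℝ) + ENNReal.ofReal C * H :=
        add_le_add (mul_le_mul_left hc₁C _) (mul_le_mul_left hc₂C _)
    _ = ENNReal.ofReal C * (H + H ^ (1/2:ℝ)) := by rw [← mul_add, add_comm]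

end
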